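/- Let ν be an infinite regular cardinal with ν^{<ν} = ν. For every dense continuous homomorphism f : ν^{<ν} → ν^{<ν}, we have ran(f*) ∩ Cl_ν ≠ ∅ and ran(f*) ∩ Ns_ν ≠ ∅. -/

import Mathlib

universe u

noncomputable section

/-! ## Sequences of ordinals

`SeqLT o v` is the set `v^{<o}` of all sequences of ordinals `< v` of length `< o`
(for `o > 0`; values beyond the length are normalized to `0`).
`SeqFull o v` is the generalized Baire space `v^o` of all functions from ordinals `< o`
to ordinals `< v`. -/

/-- An element of `v^{<o}`: a sequence of ordinals `< v` of length `< o`. -/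
structure SeqLT (o v : Ordinal.{u}) : Type (u + 1) where
  len : Ordinal.{u}
  len_lt : len < o ⊔ 1
  val : Ordinal.{u} → Ordinal.{u}
  val_lt : ∀ β, β < len → val β < v
  val_zero : ∀ β, len ≤ β → val β = 0

namespace SeqLT

variable {o v : Ordinal.{u}}

/-- `s ⊆ t`, i.e. `t` end-extends `s`. -/
protected def le (s t : SeqLT o v) : Prop :=
  s.len ≤ t.len ∧ ∀ β, β < s.len → s.val β = t.val β

/-- `s ⊊ t`, i.e. `t` properly end-extends `s`. -/
protected def slt (s t : SeqLT o v) : Prop :=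
  s.le t ∧ s.len < t.len

/-- The empty sequence. -/
protected def empty (o v : Ordinal.{u}) : SeqLT o v where
  len := 0
  len_lt := lt_sup_iff.mpr (Or.inr zero_lt_one)
  val := fun _ => 0
  val_lt := fun β h => absurd h (not_lt.mpr zero_le)
  val_zero := fun _ _ => rfl

/-- `s⌢⟨β⟩`: the sequence `s` extended by the single value `β`. -/
def snoc (s : SeqLT o v) (β : Ordinal.{u}) : SeqLT o v :=
  if h : s.len + 1 < o ⊔ 1 ∧ β < v then
    { len := s.len + 1
      len_lt := h.1
      val := fun γ => if γ = s.len then β else s.val γ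
      val_lt := fun γ hγ => by
        rcases eq_or_ne γ s.len with rfl | hne
        · simpa using h.2
        · simp only [if_neg hne]
          refine s.val_lt γ (lt_of_le_of_ne ?_ hne)
          rw [Ordinal.add_one_eq_succ] at hγ
          exact Order.lt_succ_iff.mp hγ
      val_zero := fun γ hγ => by
        have h1 : s.len < γ :=
          lt_of_lt_of_le (by rw [Ordinal.add_one_eq_succ]; exact Order.lt_succ s.len) hγ
        simp only [if_neg h1.ne']
        exact s.val_zero γ h1.le }
  else s

protected theorem le_refl (s : SeqLT o v) : s.le s :=
  ⟨le_rfl, fun _ _ => rfl⟩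

protected theorem le_trans {s t u : SeqLT o v} (h1 : s.le t) (h2 : t.le u) : s.le u :=
  ⟨h1.1.trans h2.1, fun β hβ => (h1.2 β hβ).trans (h2.2 β (lt_of_lt_of_le hβ h1.1))⟩

end SeqLT

/-- An element of the generalized Baire space `v^o`. -/
structure SeqFull (o v : Ordinal.{u}) : Type (u + 1) where
  val : Ordinal.{u} → Ordinal.{u}
  val_lt : ∀ β, β < o → val β < v
  val_zero : ∀ β, o ≤ β → val β = 0

/-- The restriction `x ↾ β` of `x : v^o` to an ordinal `β < o`. -/
def SeqFull.res {o v : Ordinal.{u}} (x : SeqFull o v) (β : Ordinal.{u}) : SeqLT o v :=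
  if h : β < o ⊔ 1 then
    { len := β
      len_lt := h
      val := fun γ => if γ < β then x.val γ else 0
      val_lt := fun γ hγ => by
        simp only [if_pos hγ]
        rcases lt_sup_iff.mp h with h' | h'
        · exact x.val_lt γ (hγ.trans h')
        · rw [Ordinal.lt_one_iff_zero] at h'
          exact absurd (h' ▸ hγ) (not_lt.mpr zero_le)
      val_zero := fun γ hγ => if_neg (not_lt.mpr hγ) }
  else SeqLT.empty o v

/-- `s ⊆ x`: the sequence `s` is an initial segment of `x : v^o`. -/
def SeqLT.prefixOf {o v : Ordinal.{u}} (s : SeqLT o v) (x : SeqFull o v) : Prop :=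
  ∀ β, β < s.len → s.val β = x.val β

/-! ## The bounded topology -/

/-- The basic open set `N_t`. -/
def basicOpen {o v : Ordinal.{u}} (t : SeqLT o v) : Set (SeqFull o v) :=
  {x | t.prefixOf x}

/-- The bounded (standard) topology on the generalized Baire space, generated by the
basic open sets `N_t`. -/
instance (o v : Ordinal.{u}) : TopologicalSpace (SeqFull o v) :=
  TopologicalSpace.generateFrom {U | ∃ t : SeqLT o v, U = basicOpen t}

/-- `A` is a nowhere dense subset of `B` (in the subspace topology on `B`). -/
def NowhereDenseIn {o v : Ordinal.{u}} (A B : Set (SeqFull o v)) : Prop :=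
  A ⊆ B ∧ interior (closure {x : ↥B | (x : SeqFull o v) ∈ A}) = ∅

/-- `A` is `o`-meager in `B`: `A ∩ B` is the union of (card of) `o` many nowhere dense
subsets of `B`. -/
def MeagerIn {o v : Ordinal.{u}} (A B : Set (SeqFull o v)) : Prop :=
  ∃ F : {β : Ordinal.{u} // β < o} → Set (SeqFull o v),
    (∀ i, NowhereDenseIn (F i) B) ∧ A ∩ B = ⋃ i, F i

/-- `A` is comeager in `B`: `B \ A` is meager in `B`. -/
def ComeagerIn {o v : Ordinal.{u}} (A B : Set (SeqFull o v)) : Prop :=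
  MeagerIn (B \ A) B

/-- `A` has the `o`-Baire property: for some open `U`, `A △ U` is meager. -/
def BaireSet {o v : Ordinal.{u}} (A : Set (SeqFull o v)) : Prop :=
  ∃ U : Set (SeqFull o v), IsOpen U ∧ MeagerIn (symmDiff A U) Set.univ

/-! ## Homomorphisms of `v^{<o}` -/

/-- A homomorphism: strictly extension-preserving map of `v^{<o}` to itself. -/
def IsHom {o v : Ordinal.{u}} (f : SeqLT o v → SeqLT o v) : Prop :=
  ∀ s t : SeqLT o v, s.slt t → (f s).slt (f t)

/-- `f` is dense: for every `s` and every `t ⊇ f(s)` there is `β < v` with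
`f(s⌢⟨β⟩) ⊇ t`. -/
def IsDenseMap {o v : Ordinal.{u}} (f : SeqLT o v → SeqLT o v) : Prop :=
  ∀ s t : SeqLT o v, (f s).le t → ∃ β, β < v ∧ t.le (f (s.snoc β))

/-- `u = ⋃_{α<γ} s α` for a chain `s`. -/
def IsUnionOfChain {o v : Ordinal.{u}} (u : SeqLT o v) (γ : Ordinal.{u})
    (s : Ordinal.{u} → SeqLT o v) : Prop :=
  (∀ α, α < γ → (s α).le u) ∧ ∀ β, β < u.len → ∃ α, α < γ ∧ β < (s α).len

/-- `f` is continuous: for every limit `γ < o` and every strictly increasing sequence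
`⟨s_α : α < γ⟩`, `f(⋃_{α<γ} s_α) = ⋃_{α<γ} f(s_α)`. -/
def IsContinuousMap {o v : Ordinal.{u}} (f : SeqLT o v → SeqLT o v) : Prop :=
  ∀ γ : Ordinal.{u}, Order.IsSuccLimit γ → γ < o →
    ∀ s : Ordinal.{u} → SeqLT o v, (∀ α β, α < β → β < γ → (s α).slt (s β)) →
      ∀ u : SeqLT o v, IsUnionOfChain u γ s → IsUnionOfChain (f u) γ fun α => f (s α)

/-- `y = f*(x) = ⋃_{α<o} f(x↾α)` for a homomorphism `f`. -/
def FStarVal {o v : Ordinal.{u}} (f : SeqLT o v → SeqLT o v) (x y : SeqFull o v) : Prop :=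
  (∀ α, α < o → (f (x.res α)).prefixOf y) ∧
    ∀ β, β < o → ∃ α, α < o ∧ β < (f (x.res α)).len

/-! ## Clubs and the almost Baire property -/

/-- `C` is a club (closed unbounded set) in the ordinal `o`. -/
def IsClubIn (C : Set Ordinal.{u}) (o : Ordinal.{u}) : Prop :=
  (∀ γ ∈ C, γ < o) ∧ (∀ β, β < o → ∃ γ ∈ C, β ≤ γ) ∧
    ∀ β, β < o → 0 < β → (∀ γ, γ < β → ∃ ξ ∈ C, γ < ξ ∧ ξ < β) → β ∈ C

/-- The set of functions coding elements of the club filter as characteristic functions. -/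
def ClSet (o v : Ordinal.{u}) : Set (SeqFull o v) :=
  {x | ∃ C : Set Ordinal.{u}, IsClubIn C o ∧ ∀ i ∈ C, x.val i ≠ 0}

/-- The set of functions coding elements of the nonstationary ideal. -/
def NsSet (o v : Ordinal.{u}) : Set (SeqFull o v) :=
  {x | ∃ C : Set Ordinal.{u}, IsClubIn C o ∧ ∀ i ∈ C, x.val i = 0}

/-- `A` is almost Baire: there is a dense homomorphism `f` with `ran f* ⊆ A`, or a dense
continuous homomorphism `f` with `f ∅ = ∅` and `ran f* ⊆ Aᶜ`. -/
def AlmostBaire {o v : Ordinal.{u}} (A : Set (SeqFull o v)) : Prop :=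
  ∃ f : SeqLT o v → SeqLT o v, IsHom f ∧ IsDenseMap f ∧
    ((∀ x y, FStarVal f x y → y ∈ A) ∨
      ((∀ x y, FStarVal f x y → y ∉ A) ∧ IsContinuousMap f ∧
        f (SeqLT.empty o v) = SeqLT.empty o v))

/-! ## Banach–Mazur games of length `o`

A run of the game is a strictly increasing sequence `⟨s_α : α < o⟩` in `v^{<o}`;
player I plays at even positions (`0` and limits count as even), player II at odd ones.
In the game `G^t` the first move of player I must extend `t`; taking `t = ∅` gives the
plain Banach–Mazur game. -/

/-- `γ` is an even ordinal (`0` and limits are even). -/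
def EvenOrd (γ : Ordinal.{u}) : Prop := ∃ δ : Ordinal.{u}, γ = 2 * δ

/-- `γ` is an odd ordinal. -/
def OddOrd (γ : Ordinal.{u}) : Prop := ∃ δ : Ordinal.{u}, γ = 2 * δ + 1

/-- The moves of a (partial) run, as a function on ordinals. -/
abbrev Play (o v : Ordinal.{u}) := Ordinal.{u} → SeqLT o v

/-- A strategy: given the length of the current position and the moves so far,
produce the next move. -/
abbrev Strat (o v : Ordinal.{u}) := Ordinal.{u} → Play o v → SeqLT o v

/-- `p` is a legal partial run of length `γ` of the game `G^t`: strictly increasing moves,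
the first move extends `t`, and the moves beyond `γ` are normalized to `∅`. -/
def IsPos {o v : Ordinal.{u}} (t : SeqLT o v) (p : Play o v) (γ : Ordinal.{u}) : Prop :=
  (∀ α β, α < β → β < γ → (p α).slt (p β)) ∧ (0 < γ → t.le (p 0)) ∧
    ∀ α, γ ≤ α → p α = SeqLT.empty o v

/-- The restriction of a run to its first `γ` moves. -/
def resPlay {o v : Ordinal.{u}} (p : Play o v) (γ : Ordinal.{u}) : Play o v :=
  fun α => if α < γ then p α else SeqLT.empty o v

/-- `m` is a legal move at the position `p` of length `γ` in the game `G^t`. -/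
def MoveOK {o v : Ordinal.{u}} (t : SeqLT o v) (p : Play o v) (γ : Ordinal.{u})
    (m : SeqLT o v) : Prop :=
  (∀ α, α < γ → (p α).slt m) ∧ (γ = 0 → t.le m)

/-- `σ` is a strategy for player I in `G^t`: it assigns a legal move to every legal
position of even length. -/
def LegalI {o v : Ordinal.{u}} (t : SeqLT o v) (σ : Strat o v) : Prop :=
  ∀ γ, γ < o → EvenOrd γ → ∀ p, IsPos t p γ → MoveOK t p γ (σ γ p)

/-- `σ` is a strategy for player II in `G^t`: it assigns a legal move to every legal
position of odd length. -/
def LegalII {o v : Ordinal.{u}} (t : SeqLT o v) (σ : Strat o v) : Prop :=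
  ∀ γ, γ < o → OddOrd γ → ∀ p, IsPos t p γ → MoveOK t p γ (σ γ p)

/-- The first `γ` moves of `p` follow the strategy `σ` of player I. -/
def FollowsI {o v : Ordinal.{u}} (σ : Strat o v) (p : Play o v) (γ : Ordinal.{u}) : Prop :=
  ∀ α, α < γ → EvenOrd α → p α = σ α (resPlay p α)

/-- The first `γ` moves of `p` follow the strategy `σ` of player II. -/
def FollowsII {o v : Ordinal.{u}} (σ : Strat o v) (p : Play o v) (γ : Ordinal.{u}) : Prop :=
  ∀ α, α < γ → OddOrd α → p α = σ α (resPlay p α)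

/-- `x = ⋃_{α<o} p α` is the outcome of the complete run `p`. -/
def IsOutcome {o v : Ordinal.{u}} (p : Play o v) (x : SeqFull o v) : Prop :=
  (∀ α, α < o → (p α).prefixOf x) ∧ ∀ β, β < o → ∃ α, α < o ∧ β < (p α).len

/-- Player I has a winning strategy in the Banach–Mazur game `G^t(A)` of length `o`. -/
def WinIStrat {o v : Ordinal.{u}} (t : SeqLT o v) (A : Set (SeqFull o v)) : Prop :=
  ∃ σ : Strat o v, LegalI t σ ∧
    ∀ p : Play o v, IsPos t p o → FollowsI σ p o → ∃ x, IsOutcome p x ∧ x ∈ A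

/-- Player II has a winning strategy in the Banach–Mazur game `G^t(A)` of length `o`. -/
def WinIIStrat {o v : Ordinal.{u}} (t : SeqLT o v) (A : Set (SeqFull o v)) : Prop :=
  ∃ σ : Strat o v, LegalII t σ ∧
    ∀ p : Play o v, IsPos t p o → FollowsII σ p o → ∃ x, IsOutcome p x ∧ x ∉ A

/-- `σ` is a tactic for player II: its moves depend only on the union of the previous moves. -/
def IsTacticII {o v : Ordinal.{u}} (t : SeqLT o v) (σ : Strat o v) : Prop :=
  ∃ f : SeqLT o v → SeqLT o v, ∀ γ, γ < o → OddOrd γ → ∀ p, IsPos t p γ →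
    ∀ u, IsUnionOfChain u γ p → σ γ p = f u

/-- Player II has a winning tactic in the Banach–Mazur game `G^t(A)` of length `o`. -/
def WinIITactic {o v : Ordinal.{u}} (t : SeqLT o v) (A : Set (SeqFull o v)) : Prop :=
  ∃ σ : Strat o v, LegalII t σ ∧ IsTacticII t σ ∧
    ∀ p : Play o v, IsPos t p o → FollowsII σ p o → ∃ x, IsOutcome p x ∧ x ∉ A

/-! ## Trees and perfect sets -/

/-- A subtree of `v^{<o}`: a downwards closed set of sequences. -/
def IsSubtree {o v : Ordinal.{u}} (T : Set (SeqLT o v)) : Prop :=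
  ∀ s ∈ T, ∀ r : SeqLT o v, r.le s → r ∈ T

/-- `T` is closed: every strictly increasing sequence in `T` of length `< o` has an
upper bound in `T`. -/
def TreeClosed {o v : Ordinal.{u}} (T : Set (SeqLT o v)) : Prop :=
  ∀ γ : Ordinal.{u}, γ < o → ∀ s : Ordinal.{u} → SeqLT o v,
    (∀ α β, α < β → β < γ → (s α).slt (s β)) → (∀ α, α < γ → s α ∈ T) →
      ∃ b ∈ T, ∀ α, α < γ → (s α).le b

/-- `t` is a direct successor of `s`. -/
def IsDirectSucc {o v : Ordinal.{u}} (s t : SeqLT o v) : Prop :=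
  s.slt t ∧ t.len = s.len + 1

/-- `T` is a perfect tree: a (nonempty) closed subtree whose splitting nodes are cofinal. -/
def IsPerfectTree {o v : Ordinal.{u}} (T : Set (SeqLT o v)) : Prop :=
  T.Nonempty ∧ IsSubtree T ∧ TreeClosed T ∧
    ∀ s ∈ T, ∃ t ∈ T, s.le t ∧
      ∃ t₁ ∈ T, ∃ t₂ ∈ T, IsDirectSucc t t₁ ∧ IsDirectSucc t t₂ ∧ t₁ ≠ t₂

/-- The body `[T]` of a tree `T`: the set of branches of length `o` through `T`. -/
def treeBody {o v : Ordinal.{u}} (T : Set (SeqLT o v)) : Set (SeqFull o v) :=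
  {x | ∀ α, α < o → x.res α ∈ T}

/-! ### Auxiliary material for `statement6` -/

namespace Statement6Aux

open Classical

theorem seqLT_ext {o v : Ordinal.{u}} {s t : SeqLT o v} (h1 : s.len = t.len)
    (h2 : s.val = t.val) : s = t := by
  obtain ⟨l1, p1, v1, q1, r1⟩ := s
  obtain ⟨l2, p2, v2, q2, r2⟩ := t
  obtain rfl : l1 = l2 := h1
  obtain rfl : v1 = v2 := h2
  rfl

theorem lt_add_one_ord (a : Ordinal.{u}) : a < a + 1 := by
  rw [Ordinal.add_one_eq_succ]; exact Order.lt_succ a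

theorem lt_add_one_iff_ord {a b : Ordinal.{u}} : a < b + 1 ↔ a ≤ b := by
  rw [Ordinal.add_one_eq_succ]; exact Order.lt_succ_iff

theorem add_one_le_iff_ord {a b : Ordinal.{u}} : a + 1 ≤ b ↔ a < b := by
  rw [Ordinal.add_one_eq_succ]; exact Order.succ_le_iff

theorem succ_lt_ord {o a : Ordinal.{u}} (ho : Order.IsSuccLimit o) (h : a < o) : a + 1 < o := by
  rw [Ordinal.add_one_eq_succ]; exact ho.succ_lt h

theorem sup_one_eq {o : Ordinal.{u}} (ho : 0 < o) : o ⊔ 1 = o :=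
  sup_eq_left.mpr (Order.one_le_iff_pos.mpr ho)

theorem snoc_len {o v : Ordinal.{u}} {s : SeqLT o v} {β : Ordinal.{u}}
    (h1 : s.len + 1 < o ⊔ 1) (h2 : β < v) : (s.snoc β).len = s.len + 1 := by
  unfold SeqLT.snoc; rw [dif_pos ⟨h1, h2⟩]

theorem snoc_val {o v : Ordinal.{u}} {s : SeqLT o v} {β : Ordinal.{u}}
    (h1 : s.len + 1 < o ⊔ 1) (h2 : β < v) (γ : Ordinal.{u}) :
    (s.snoc β).val γ = if γ = s.len then β else s.val γ := by
  unfold SeqLT.snoc; rw [dif_pos ⟨h1, h2⟩]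

theorem le_snoc {o v : Ordinal.{u}} (s : SeqLT o v) (β : Ordinal.{u}) : s.le (s.snoc β) := by
  unfold SeqLT.snoc; split_ifs with h
  · refine ⟨le_self_add, fun γ hγ => ?_⟩
    exact (if_neg hγ.ne).symm
  · exact s.le_refl

/-- A sequence of length `α` with prescribed (truncated) values. -/
def mkSeq (o v : Ordinal.{u}) (hv : 0 < v) (g : Ordinal.{u} → Ordinal.{u})
    (α : Ordinal.{u}) (hα : α < o ⊔ 1) : SeqLT o v where
  len := α
  len_lt := hα
  val := fun β => if β < α ∧ g β < v then g β else 0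
  val_lt := fun β _ => by
    show (if β < α ∧ g β < v then g β else 0) < v
    split_ifs with h
    exacts [h.2, hv]
  val_zero := fun β hβ => by
    show (if β < α ∧ g β < v then g β else 0) = 0
    exact if_neg fun h => absurd h.1 hβ.not_gt

theorem mkSeq_congr {o v : Ordinal.{u}} (hv : 0 < v) {g g' : Ordinal.{u} → Ordinal.{u}}
    (α : Ordinal.{u}) (hα : α < o ⊔ 1) (h : ∀ β, β < α → g β = g' β) :
    mkSeq o v hv g α hα = mkSeq o v hv g' α hα := by
  refine seqLT_ext rfl (funext fun β => ?_)
  show (if β < α ∧ g β < v then g β else 0) = (if β < α ∧ g' β < v then g' β else 0)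
  by_cases hβ : β < α
  · rw [h β hβ]
  · rw [if_neg fun hc => hβ hc.1, if_neg fun hc => hβ hc.1]

/-- One step of the recursive construction. -/
def gFAux {o v : Ordinal.{u}} (hv : 0 < v) (f : SeqLT o v → SeqLT o v)
    (hdense : IsDenseMap f) (c : Ordinal.{u}) (α : Ordinal.{u})
    (ih : ∀ β, β < α → Ordinal.{u}) : Ordinal.{u} :=
  if h : α < o then
    Classical.choose (hdense
      (mkSeq o v hv (fun β => if hβ : β < α then ih β hβ else 0) α (h.trans_le le_sup_left))
      ((f (mkSeq o v hv (fun β => if hβ : β < α then ih β hβ else 0) α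
        (h.trans_le le_sup_left))).snoc c)
      (le_snoc _ _))
  else 0

/-- The branch values of the recursive construction. -/
def gF {o v : Ordinal.{u}} (hv : 0 < v) (f : SeqLT o v → SeqLT o v)
    (hdense : IsDenseMap f) (c : Ordinal.{u}) : Ordinal.{u} → Ordinal.{u} :=
  Ordinal.lt_wf.fix (gFAux hv f hdense c)

/-- The chain of sequences of the recursive construction. -/
def sOf {o v : Ordinal.{u}} (hv : 0 < v) (f : SeqLT o v → SeqLT o v)
    (hdense : IsDenseMap f) (c : Ordinal.{u}) (α : Ordinal.{u}) : SeqLT o v :=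
  if h : α < o then mkSeq o v hv (gF hv f hdense c) α (h.trans_le le_sup_left)
  else SeqLT.empty o v

theorem gF_spec {o v : Ordinal.{u}} (hv : 0 < v) (f : SeqLT o v → SeqLT o v)
    (hdense : IsDenseMap f) (c : Ordinal.{u}) (α : Ordinal.{u}) (h : α < o) :
    gF hv f hdense c α < v ∧
      ((f (sOf hv f hdense c α)).snoc c).le
        (f ((sOf hv f hdense c α).snoc (gF hv f hdense c α))) := by
  have hfix : gF hv f hdense c α = gFAux hv f hdense c α (fun β _ => gF hv f hdense c β) :=
    Ordinal.lt_wf.fix_eq (gFAux hv f hdense c) α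
  rw [gFAux, dif_pos h] at hfix
  set s₁ := mkSeq o v hv (fun β => if hβ : β < α then gF hv f hdense c β else 0) α
    (h.trans_le le_sup_left) with hs₁
  have hseq : s₁ = sOf hv f hdense c α := by
    rw [sOf, dif_pos h]
    exact mkSeq_congr hv α _ fun β hβ => dif_pos hβ
  have hspec := Classical.choose_spec (hdense s₁ ((f s₁).snoc c) (le_snoc _ _))
  rw [← hfix] at hspec
  rw [hseq] at hspec
  exact hspec

theorem gF_lt {o v : Ordinal.{u}} (hv : 0 < v) (f : SeqLT o v → SeqLT o v)
    (hdense : IsDenseMap f) (c : Ordinal.{u}) (α : Ordinal.{u}) :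
    gF hv f hdense c α < v := by
  by_cases h : α < o
  · exact (gF_spec hv f hdense c α h).1
  · have hfix : gF hv f hdense c α = gFAux hv f hdense c α (fun β _ => gF hv f hdense c β) :=
      Ordinal.lt_wf.fix_eq (gFAux hv f hdense c) α
    rw [gFAux, dif_neg h] at hfix
    rw [hfix]
    exact hv

theorem sOf_len {o v : Ordinal.{u}} (hv : 0 < v) (f : SeqLT o v → SeqLT o v)
    (hdense : IsDenseMap f) (c : Ordinal.{u}) (α : Ordinal.{u}) (h : α < o) :
    (sOf hv f hdense c α).len = α := by
  rw [sOf, dif_pos h]; rfl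

theorem sOf_val {o v : Ordinal.{u}} (hv : 0 < v) (f : SeqLT o v → SeqLT o v)
    (hdense : IsDenseMap f) (c : Ordinal.{u}) (α : Ordinal.{u}) (h : α < o) (β : Ordinal.{u}) :
    (sOf hv f hdense c α).val β = if β < α then gF hv f hdense c β else 0 := by
  rw [sOf, dif_pos h]
  show (if β < α ∧ gF hv f hdense c β < v then gF hv f hdense c β else 0) = _
  by_cases hβ : β < α
  · rw [if_pos ⟨hβ, gF_lt hv f hdense c β⟩, if_pos hβ]
  · rw [if_neg fun hc => hβ hc.1, if_neg hβ]

theorem sOf_le {o v : Ordinal.{u}} (hv : 0 < v) (f : SeqLT o v → SeqLT o v)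
    (hdense : IsDenseMap f) (c : Ordinal.{u}) {α α' : Ordinal.{u}}
    (hαα' : α ≤ α') (h' : α' < o) :
    (sOf hv f hdense c α).le (sOf hv f hdense c α') := by
  have h : α < o := lt_of_le_of_lt hαα' h'
  refine ⟨?_, fun β hβ => ?_⟩
  · rw [sOf_len hv f hdense c α h, sOf_len hv f hdense c α' h']; exact hαα'
  · rw [sOf_len hv f hdense c α h] at hβ
    rw [sOf_val hv f hdense c α h, sOf_val hv f hdense c α' h',
      if_pos hβ, if_pos (hβ.trans_le hαα')]

theorem sOf_slt {o v : Ordinal.{u}} (hv : 0 < v) (f : SeqLT o v → SeqLT o v)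
    (hdense : IsDenseMap f) (c : Ordinal.{u}) {α α' : Ordinal.{u}}
    (hαα' : α < α') (h' : α' < o) :
    (sOf hv f hdense c α).slt (sOf hv f hdense c α') := by
  refine ⟨sOf_le hv f hdense c hαα'.le h', ?_⟩
  rw [sOf_len hv f hdense c α (hαα'.trans h'), sOf_len hv f hdense c α' h']
  exact hαα'

theorem sOf_snoc {o v : Ordinal.{u}} (hv : 0 < v) (ho : Order.IsSuccLimit o)
    (f : SeqLT o v → SeqLT o v) (hdense : IsDenseMap f) (c : Ordinal.{u})
    (α : Ordinal.{u}) (h : α < o) :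
    (sOf hv f hdense c α).snoc (gF hv f hdense c α) = sOf hv f hdense c (α + 1) := by
  have h1 : α + 1 < o := succ_lt_ord ho h
  have hlen : (sOf hv f hdense c α).len = α := sOf_len hv f hdense c α h
  have hcond : (sOf hv f hdense c α).len + 1 < o ⊔ 1 := by
    rw [hlen]; exact h1.trans_le le_sup_left
  have hg : gF hv f hdense c α < v := gF_lt hv f hdense c α
  refine seqLT_ext ?_ (funext fun β => ?_)
  · rw [snoc_len hcond hg, hlen, sOf_len hv f hdense c _ h1]
  · rw [snoc_val hcond hg β, hlen, sOf_val hv f hdense c _ h1 β,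
      sOf_val hv f hdense c _ h β]
    rcases lt_trichotomy β α with hβ | hβ | hβ
    · rw [if_neg hβ.ne, if_pos hβ, if_pos (hβ.trans (lt_add_one_ord α))]
    · rw [if_pos hβ, if_pos (hβ ▸ lt_add_one_ord α)]
      exact hβ ▸ rfl
    · rw [if_neg hβ.ne', if_neg (not_lt.mpr hβ.le), if_neg (not_lt.mpr (add_one_le_iff_ord.mpr hβ))]

theorem lenF_lt_o {o v : Ordinal.{u}} (hv : 0 < v) (ho : Order.IsSuccLimit o)
    (f : SeqLT o v → SeqLT o v) (hdense : IsDenseMap f) (c : Ordinal.{u}) (α : Ordinal.{u}) :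
    (f (sOf hv f hdense c α)).len < o := by
  have := (f (sOf hv f hdense c α)).len_lt
  rwa [sup_one_eq ho.pos] at this

theorem fChain_le {o v : Ordinal.{u}} (hv : 0 < v) (f : SeqLT o v → SeqLT o v)
    (hdense : IsDenseMap f) (c : Ordinal.{u}) (hhom : IsHom f) {α α' : Ordinal.{u}}
    (hαα' : α ≤ α') (h' : α' < o) :
    (f (sOf hv f hdense c α)).le (f (sOf hv f hdense c α')) := by
  rcases hαα'.lt_or_eq with hlt | rfl
  · exact (hhom _ _ (sOf_slt hv f hdense c hlt h')).1
  · exact (f _).le_refl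

theorem lenF_lt {o v : Ordinal.{u}} (hv : 0 < v) (f : SeqLT o v → SeqLT o v)
    (hdense : IsDenseMap f) (c : Ordinal.{u}) (hhom : IsHom f) {α α' : Ordinal.{u}}
    (hαα' : α < α') (h' : α' < o) :
    (f (sOf hv f hdense c α)).len < (f (sOf hv f hdense c α')).len :=
  (hhom _ _ (sOf_slt hv f hdense c hαα' h')).2

theorem lenF_ge {o v : Ordinal.{u}} (hv : 0 < v) (f : SeqLT o v → SeqLT o v)
    (hdense : IsDenseMap f) (c : Ordinal.{u}) (hhom : IsHom f) (α : Ordinal.{u}) (h : α < o) :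
    α ≤ (f (sOf hv f hdense c α)).len := by
  revert h
  induction α using Ordinal.induction with
  | _ α ih =>
    intro h
    by_contra hcon
    push_neg at hcon
    have h2 := ih _ hcon (hcon.trans h)
    exact absurd (h2.trans_lt (lenF_lt hv f hdense c hhom hcon h)) (lt_irrefl _)

theorem control {o v : Ordinal.{u}} (hv : 0 < v) (ho : Order.IsSuccLimit o)
    (f : SeqLT o v → SeqLT o v) (hdense : IsDenseMap f) (c : Ordinal.{u}) (hc : c < v)
    (α : Ordinal.{u}) (h : α < o) :
    (f (sOf hv f hdense c (α + 1))).val (f (sOf hv f hdense c α)).len = c := by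
  have hspec := (gF_spec hv f hdense c α h).2
  rw [sOf_snoc hv ho f hdense c α h] at hspec
  have hcond : (f (sOf hv f hdense c α)).len + 1 < o ⊔ 1 :=
    (succ_lt_ord ho (lenF_lt_o hv ho f hdense c α)).trans_le le_sup_left
  have hlt : (f (sOf hv f hdense c α)).len < ((f (sOf hv f hdense c α)).snoc c).len := by
    rw [snoc_len hcond hc]; exact lt_add_one_ord _
  rw [← hspec.2 _ hlt, snoc_val hcond hc, if_pos rfl]

theorem lenF_limit {o v : Ordinal.{u}} (hv : 0 < v) (ho : Order.IsSuccLimit o)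
    (f : SeqLT o v → SeqLT o v) (hdense : IsDenseMap f) (c : Ordinal.{u})
    (hcont : IsContinuousMap f) (δ : Ordinal.{u}) (hδ : Order.IsSuccLimit δ) (h : δ < o) :
    IsUnionOfChain (f (sOf hv f hdense c δ)) δ fun α => f (sOf hv f hdense c α) := by
  refine hcont δ hδ h _ (fun α β hab hbδ => sOf_slt hv f hdense c hab (hbδ.trans h)) _
    ⟨fun α hα => sOf_le hv f hdense c hα.le h, fun β hβ => ?_⟩
  rw [sOf_len hv f hdense c δ h] at hβ
  have hs : β + 1 < δ := succ_lt_ord hδ hβ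
  refine ⟨β + 1, hs, ?_⟩
  rw [sOf_len hv f hdense c _ (hs.trans h)]
  exact lt_add_one_ord β

/-- The generic branch `x`. -/
def xF {o v : Ordinal.{u}} (hv : 0 < v) (f : SeqLT o v → SeqLT o v)
    (hdense : IsDenseMap f) (c : Ordinal.{u}) : SeqFull o v where
  val := fun β => if β < o then gF hv f hdense c β else 0
  val_lt := fun β h => by
    show (if β < o then gF hv f hdense c β else 0) < v
    rw [if_pos h]; exact gF_lt hv f hdense c β
  val_zero := fun β h => if_neg (not_lt.mpr h)

/-- The image branch `y = f*(x)`. -/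
def yF {o v : Ordinal.{u}} (hv : 0 < v) (ho : Order.IsSuccLimit o) (f : SeqLT o v → SeqLT o v)
    (hdense : IsDenseMap f) (c : Ordinal.{u}) (hhom : IsHom f) : SeqFull o v where
  val := fun β => if β < o then (f (sOf hv f hdense c (β + 1))).val β else 0
  val_lt := fun β h => by
    show (if β < o then (f (sOf hv f hdense c (β + 1))).val β else 0) < v
    rw [if_pos h]
    have h1 : β + 1 < o := succ_lt_ord ho h
    exact (f _).val_lt β ((lt_add_one_ord β).trans_le (lenF_ge hv f hdense c hhom _ h1))
  val_zero := fun β h => if_neg (not_lt.mpr h)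

theorem xF_res {o v : Ordinal.{u}} (hv : 0 < v) (f : SeqLT o v → SeqLT o v)
    (hdense : IsDenseMap f) (c : Ordinal.{u}) (α : Ordinal.{u}) (h : α < o) :
    (xF hv f hdense c).res α = sOf hv f hdense c α := by
  rw [SeqFull.res, dif_pos (h.trans_le le_sup_left)]
  refine seqLT_ext ?_ (funext fun γ => ?_)
  · rw [sOf_len hv f hdense c α h]
  · show (if γ < α then (xF hv f hdense c).val γ else 0) = _
    rw [sOf_val hv f hdense c α h]
    by_cases hγ : γ < α
    · rw [if_pos hγ, if_pos hγ]
      show (if γ < o then gF hv f hdense c γ else 0) = _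
      rw [if_pos (hγ.trans h)]
    · rw [if_neg hγ, if_neg hγ]

theorem y_coh {o v : Ordinal.{u}} (hv : 0 < v) (ho : Order.IsSuccLimit o) (f : SeqLT o v → SeqLT o v)
    (hdense : IsDenseMap f) (c : Ordinal.{u}) (hhom : IsHom f) (α : Ordinal.{u}) (h : α < o)
    (β : Ordinal.{u}) (hβ : β < (f (sOf hv f hdense c α)).len) :
    (yF hv ho f hdense c hhom).val β = (f (sOf hv f hdense c α)).val β := by
  have hβo : β < o := hβ.trans (lenF_lt_o hv ho f hdense c α)
  have hβ1 : β + 1 < o := succ_lt_ord ho hβo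
  show (if β < o then (f (sOf hv f hdense c (β + 1))).val β else 0) = _
  rw [if_pos hβo]
  rcases le_total α (β + 1) with hle | hle
  · exact ((fChain_le hv f hdense c hhom hle hβ1).2 β hβ).symm
  · exact (fChain_le hv f hdense c hhom hle h).2 β
      ((lt_add_one_ord β).trans_le (lenF_ge hv f hdense c hhom _ hβ1))

theorem fstar {o v : Ordinal.{u}} (hv : 0 < v) (ho : Order.IsSuccLimit o) (f : SeqLT o v → SeqLT o v)
    (hdense : IsDenseMap f) (c : Ordinal.{u}) (hhom : IsHom f) :
    FStarVal f (xF hv f hdense c) (yF hv ho f hdense c hhom) := by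
  constructor
  · intro α hα
    rw [xF_res hv f hdense c α hα]
    intro β hβ
    exact (y_coh hv ho f hdense c hhom α hα β hβ).symm
  · intro β hβ
    have h1 : β + 1 < o := succ_lt_ord ho hβ
    refine ⟨β + 1, h1, ?_⟩
    rw [xF_res hv f hdense c _ h1]
    exact (lt_add_one_ord β).trans_le (lenF_ge hv f hdense c hhom _ h1)

/-- The club of lengths of the `f`-chain. -/
def clubC {o v : Ordinal.{u}} (hv : 0 < v) (f : SeqLT o v → SeqLT o v)
    (hdense : IsDenseMap f) (c : Ordinal.{u}) : Set Ordinal.{u} :=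
  {β | ∃ α, α < o ∧ (f (sOf hv f hdense c α)).len = β}

theorem clubC_club {o v : Ordinal.{u}} (hv : 0 < v) (ho : Order.IsSuccLimit o)
    (f : SeqLT o v → SeqLT o v) (hdense : IsDenseMap f) (c : Ordinal.{u})
    (hhom : IsHom f) (hcont : IsContinuousMap f) :
    IsClubIn (clubC hv f hdense c) o := by
  refine ⟨?_, ?_, ?_⟩
  · rintro γ ⟨α, hα, rfl⟩
    exact lenF_lt_o hv ho f hdense c α
  · intro β hβ
    exact ⟨_, ⟨β, hβ, rfl⟩, lenF_ge hv f hdense c hhom β hβ⟩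
  · intro β hβo hβpos hcof
    have hSne : Set.Nonempty {α : Ordinal.{u} | α < o ∧ β ≤ (f (sOf hv f hdense c α)).len} :=
      ⟨β, hβo, lenF_ge hv f hdense c hhom β hβo⟩
    set S := {α : Ordinal.{u} | α < o ∧ β ≤ (f (sOf hv f hdense c α)).len} with hS
    set δ := Ordinal.lt_wf.min S hSne with hδdef
    have hδS : δ ∈ S := Ordinal.lt_wf.min_mem S hSne
    have hδo : δ < o := hδS.1
    have hlt : ∀ α, α < δ → (f (sOf hv f hdense c α)).len < β := fun α hα =>
      lt_of_not_ge fun hle =>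
        Ordinal.lt_wf.not_lt_min S (⟨hα.trans hδo, hle⟩ : α ∈ S) hα
    have hδ0 : δ ≠ 0 := by
      intro h0
      obtain ⟨ξ, ⟨ε, hεo, rfl⟩, hξpos, hξβ⟩ := hcof 0 hβpos
      have hmono : (f (sOf hv f hdense c δ)).len ≤ (f (sOf hv f hdense c ε)).len := by
        rw [h0]
        exact (fChain_le hv f hdense c hhom (zero_le (a := ε)) hεo).1
      exact absurd hξβ (not_lt.mpr (hδS.2.trans hmono))
    have hδsucc : ∀ γ, δ ≠ γ + 1 := by
      intro γ hγ
      have hγδ : γ < δ := hγ ▸ lt_add_one_ord γ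
      obtain ⟨ξ, ⟨ε, hεo, rfl⟩, hξ1, hξ2⟩ := hcof _ (hlt γ hγδ)
      have hγε : γ < ε := by
        by_contra hle
        push_neg at hle
        exact absurd hξ1 (not_lt.mpr (fChain_le hv f hdense c hhom hle (hγδ.trans hδo)).1)
      have hδε : δ ≤ ε := hγ ▸ add_one_le_iff_ord.mpr hγε
      exact absurd hξ2 (not_lt.mpr (hδS.2.trans (fChain_le hv f hdense c hhom hδε hεo).1))
    have hδlim : Order.IsSuccLimit δ := by
      rcases Ordinal.zero_or_succ_or_isSuccLimit δ with h | ⟨γ, h⟩ | h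
      · exact absurd h hδ0
      · exact absurd (h.symm.trans (Ordinal.add_one_eq_succ γ).symm) (hδsucc γ)
      · exact h
    have hle2 : (f (sOf hv f hdense c δ)).len ≤ β := by
      by_contra hgt
      push_neg at hgt
      obtain ⟨α, hαδ, hβα⟩ := (lenF_limit hv ho f hdense c hcont δ hδlim hδo).2 β hgt
      exact absurd hβα (not_lt.mpr (hlt α hαδ).le)
    exact ⟨δ, hδo, le_antisymm hle2 hδS.2⟩

theorem yF_club {o v : Ordinal.{u}} (hv : 0 < v) (ho : Order.IsSuccLimit o)
    (f : SeqLT o v → SeqLT o v) (hdense : IsDenseMap f) (c : Ordinal.{u})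
    (hhom : IsHom f) (hc : c < v) :
    ∀ i ∈ clubC hv f hdense c, (yF hv ho f hdense c hhom).val i = c := by
  rintro i ⟨α, hα, rfl⟩
  have h1 : α + 1 < o := succ_lt_ord ho hα
  rw [y_coh hv ho f hdense c hhom (α + 1) h1 _ (lenF_lt hv f hdense c hhom (lt_add_one_ord α) h1)]
  exact control hv ho f hdense c hc α hα

end Statement6Aux
/-- For an infinite regular cardinal `ν` with `ν^{<ν} = ν` and every dense continuous
homomorphism `f : ν^{<ν} → ν^{<ν}`, the range of `f*` meets both `Cl_ν` and `Ns_ν`. -/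
theorem statement6 (ν : Cardinal.{u}) (hreg : ν.IsRegular)
    (hpow : Cardinal.powerlt ν ν = ν)
    (f : SeqLT ν.ord ν.ord → SeqLT ν.ord ν.ord)
    (hhom : IsHom f) (hdense : IsDenseMap f) (hcont : IsContinuousMap f) :
    (∃ x y, FStarVal f x y ∧ y ∈ ClSet ν.ord ν.ord) ∧
      (∃ x y, FStarVal f x y ∧ y ∈ NsSet ν.ord ν.ord) := by
  have ho : Order.IsSuccLimit ν.ord := Cardinal.isSuccLimit_ord hreg.aleph0_le
  have hv : (0 : Ordinal.{u}) < ν.ord := ho.pos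
  have h1v : (1 : Ordinal.{u}) < ν.ord :=
    Ordinal.one_lt_omega0.trans_le
      (Cardinal.ord_aleph0 ▸ Cardinal.ord_le_ord.mpr hreg.aleph0_le)
  constructor
  · exact ⟨Statement6Aux.xF hv f hdense 1, Statement6Aux.yF hv ho f hdense 1 hhom,
      Statement6Aux.fstar hv ho f hdense 1 hhom,
      Statement6Aux.clubC hv f hdense 1,
      Statement6Aux.clubC_club hv ho f hdense 1 hhom hcont,
      fun i hi => by
        rw [Statement6Aux.yF_club hv ho f hdense 1 hhom h1v i hi]
        exact one_ne_zero⟩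
  · exact ⟨Statement6Aux.xF hv f hdense 0, Statement6Aux.yF hv ho f hdense 0 hhom,
      Statement6Aux.fstar hv ho f hdense 0 hhom,
      Statement6Aux.clubC hv f hdense 0,
      Statement6Aux.clubC_club hv ho f hdense 0 hhom hcont,
      Statement6Aux.yF_club hv ho f hdense 0 hhom hv⟩

end
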